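/- arXiv:0803.2502 — 3 statements merged into one kernel-verified Lean document; each statement's English description precedes it below -/
import Mathlib

section
/- Let Q be a closed quadratic form on a Hilbert space H, bounded below by λ₀‖ω‖², with associated self-adjoint operator A and spectral projections E(λ). Let J, J' be bounded self-adjoint operators with 0 ≤ J ≤ id, J² + (J')² = id, both preserving D(Q), such that Q(Jω) + Q(J'ω) - Q(ω) ≤ γ‖ω‖² for all ω ∈ D(Q), and Q(J'ω) ≥ α‖J'ω‖² for all ω ∈ D(Q) with α > 0. If α > λ + γ, then ‖J E(λ)ω‖² ≥ ((α - λ - γ)/(α - λ₀)) ‖E(λ)ω‖² for all ω ∈ H. -/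
open ContinuousLinearMap

/-- Localization estimate for spectral projections of the operator associated to a
closed bounded-below quadratic form `Q`: if `α > λ + γ`, then
`‖J E(λ)ω‖² ≥ ((α − λ − γ)/(α − λ₀)) ‖E(λ)ω‖²` for all ω. -/
theorem stmt0 {H : Type*} [NormedAddCommGroup H] [InnerProductSpace ℝ H] [CompleteSpace H]
    (Q : H → ℝ) (D : Set H) (lam0 gam alpha lam : ℝ)
    -- Q is bounded below by λ₀ ≤ 0
    (hlam0 : lam0 ≤ 0)
    (hQlb : ∀ ω ∈ D, lam0 * ‖ω‖ ^ 2 ≤ Q ω)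
    -- J, J' bounded self-adjoint, 0 ≤ J ≤ id, J² + (J')² = id
    (J J' : H →L[ℝ] H)
    (hJsa : IsSelfAdjoint J) (hJ'sa : IsSelfAdjoint J')
    (hJpos : ∀ ω : H, (0:ℝ) ≤ inner ℝ (J ω) ω)
    (hJle : ∀ ω : H, (inner ℝ (J ω) ω : ℝ) ≤ ‖ω‖ ^ 2)
    (hsum : J ∘L J + J' ∘L J' = 1)
    -- both preserve the form domain
    (hJD : ∀ ω ∈ D, J ω ∈ D) (hJ'D : ∀ ω ∈ D, J' ω ∈ D)
    -- IMS-type defect bound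
    (hgam : 0 ≤ gam)
    (hIMS : ∀ ω ∈ D, Q (J ω) + Q (J' ω) - Q ω ≤ gam * ‖ω‖ ^ 2)
    -- ellipticity away from the critical set
    (halpha : 0 < alpha)
    (hJ'lb : ∀ ω ∈ D, alpha * ‖J' ω‖ ^ 2 ≤ Q (J' ω))
    -- E λ is the spectral projection of the associated operator onto (−∞, λ]:
    -- it maps into the form domain and satisfies the basic spectral estimate
    (E : ℝ → H →L[ℝ] H)
    (hED : ∀ μ : ℝ, ∀ ω : H, E μ ω ∈ D)
    (hEQ : ∀ μ : ℝ, ∀ ω : H, Q (E μ ω) ≤ μ * ‖E μ ω‖ ^ 2)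
    (hcond : alpha > lam + gam) :
    ∀ ω : H, ((alpha - lam - gam) / (alpha - lam0)) * ‖E lam ω‖ ^ 2 ≤ ‖J (E lam ω)‖ ^ 2 := by
  intro ω
  set φ := E lam ω with hφ
  have hφD : φ ∈ D := hED lam ω
  have hsq : ‖J φ‖ ^ 2 + ‖J' φ‖ ^ 2 = ‖φ‖ ^ 2 := by
    have h1 : (inner ℝ (J (J φ)) φ : ℝ) = ‖J φ‖ ^ 2 := by
      rw [hJsa.isSymmetric.apply_clm (J φ) φ, real_inner_self_eq_norm_sq]
    have h2 : (inner ℝ (J' (J' φ)) φ : ℝ) = ‖J' φ‖ ^ 2 := by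
      rw [hJ'sa.isSymmetric.apply_clm (J' φ) φ, real_inner_self_eq_norm_sq]
    have h3 := congrArg (fun T : H →L[ℝ] H => (inner ℝ (T φ) φ : ℝ)) hsum
    simp only [ContinuousLinearMap.add_apply, ContinuousLinearMap.comp_apply,
      ContinuousLinearMap.one_apply, inner_add_left] at h3
    rw [h1, h2, real_inner_self_eq_norm_sq] at h3
    exact h3
  have key : (alpha - lam - gam) * ‖φ‖ ^ 2 ≤ (alpha - lam0) * ‖J φ‖ ^ 2 := by
    have hQJ : lam0 * ‖J φ‖ ^ 2 ≤ Q (J φ) := hQlb _ (hJD _ hφD)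
    have hQJ' : alpha * ‖J' φ‖ ^ 2 ≤ Q (J' φ) := hJ'lb _ hφD
    have hQ : Q φ ≤ lam * ‖φ‖ ^ 2 := hEQ lam ω
    have hims := hIMS φ hφD
    nlinarith [hsq, sq_nonneg ‖J' φ‖, sq_nonneg ‖φ‖]
  have hden : 0 < alpha - lam0 := by linarith
  rw [div_mul_eq_mul_div, div_le_iff₀ hden]
  nlinarith [key]
end

section
/- Under the hypotheses of the localization proposition (Q closed quadratic form bounded below by λ₀, operators J, J' with J²+(J')²=id, IMS-type defect bounded by γ, and Q(J'ω) ≥ α‖J'ω‖²), if α > λ + γ then ‖J' E(λ)ω‖² ≤ ((λ + γ - λ₀)/(α - λ₀)) ‖E(λ)ω‖² for all ω ∈ H. -/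
open ContinuousLinearMap

/-- Localization estimate for spectral projections of the operator associated to a
closed bounded-below quadratic form `Q`: if `α > λ + γ`, then
`‖J' E(λ)ω‖² ≤ ((λ + γ − λ₀)/(α − λ₀)) ‖E(λ)ω‖²` for all ω. -/
theorem stmt1 {H : Type*} [NormedAddCommGroup H] [InnerProductSpace ℝ H] [CompleteSpace H]
    (Q : H → ℝ) (D : Set H) (lam0 gam alpha lam : ℝ)
    -- Q is bounded below by λ₀ ≤ 0
    (hlam0 : lam0 ≤ 0)
    (hQlb : ∀ ω ∈ D, lam0 * ‖ω‖ ^ 2 ≤ Q ω)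
    -- J, J' bounded self-adjoint, 0 ≤ J ≤ id, J² + (J')² = id
    (J J' : H →L[ℝ] H)
    (hJsa : IsSelfAdjoint J) (hJ'sa : IsSelfAdjoint J')
    (hJpos : ∀ ω : H, (0:ℝ) ≤ inner ℝ (J ω) ω)
    (hJle : ∀ ω : H, (inner ℝ (J ω) ω : ℝ) ≤ ‖ω‖ ^ 2)
    (hsum : J ∘L J + J' ∘L J' = 1)
    -- both preserve the form domain
    (hJD : ∀ ω ∈ D, J ω ∈ D) (hJ'D : ∀ ω ∈ D, J' ω ∈ D)
    -- IMS-type defect bound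
    (hgam : 0 ≤ gam)
    (hIMS : ∀ ω ∈ D, Q (J ω) + Q (J' ω) - Q ω ≤ gam * ‖ω‖ ^ 2)
    -- ellipticity away from the critical set
    (halpha : 0 < alpha)
    (hJ'lb : ∀ ω ∈ D, alpha * ‖J' ω‖ ^ 2 ≤ Q (J' ω))
    -- E λ is the spectral projection of the associated operator onto (−∞, λ]:
    -- it maps into the form domain and satisfies the basic spectral estimate
    (E : ℝ → H →L[ℝ] H)
    (hED : ∀ μ : ℝ, ∀ ω : H, E μ ω ∈ D)
    (hEQ : ∀ μ : ℝ, ∀ ω : H, Q (E μ ω) ≤ μ * ‖E μ ω‖ ^ 2)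
    (hcond : alpha > lam + gam) :
    ∀ ω : H, ‖J' (E lam ω)‖ ^ 2 ≤ ((lam + gam - lam0) / (alpha - lam0)) * ‖E lam ω‖ ^ 2 := by
  intro ω
  set ψ := E lam ω with hψ
  have hψD : ψ ∈ D := hED lam ω
  have hnorm : ‖J ψ‖ ^ 2 + ‖J' ψ‖ ^ 2 = ‖ψ‖ ^ 2 := by
    have h1 : J (J ψ) + J' (J' ψ) = ψ := by
      have := congrArg (fun T : H →L[ℝ] H => T ψ) hsum
      simpa using this
    have h2 : (inner ℝ (J (J ψ)) ψ : ℝ) + inner ℝ (J' (J' ψ)) ψ = inner ℝ ψ ψ := by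
      rw [← inner_add_left, h1]
    have hJ2 : (inner ℝ (J (J ψ)) ψ : ℝ) = ‖J ψ‖ ^ 2 := by
      have h := hJsa.isSymmetric (J ψ) ψ
      simp only [ContinuousLinearMap.coe_coe] at h
      rw [h, real_inner_self_eq_norm_sq]
    have hJ'2 : (inner ℝ (J' (J' ψ)) ψ : ℝ) = ‖J' ψ‖ ^ 2 := by
      have h := hJ'sa.isSymmetric (J' ψ) ψ
      simp only [ContinuousLinearMap.coe_coe] at h
      rw [h, real_inner_self_eq_norm_sq]
    rw [hJ2, hJ'2, real_inner_self_eq_norm_sq] at h2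
    exact h2
  have key : (alpha - lam0) * ‖J' ψ‖ ^ 2 ≤ (lam + gam - lam0) * ‖ψ‖ ^ 2 := by
    have h1 : Q (J ψ) + Q (J' ψ) ≤ (lam + gam) * ‖ψ‖ ^ 2 := by
      have := hIMS ψ hψD
      have := hEQ lam ω
      nlinarith [hIMS ψ hψD, hEQ lam ω]
    have h2 : lam0 * ‖J ψ‖ ^ 2 ≤ Q (J ψ) := hQlb _ (hJD ψ hψD)
    have h3 : alpha * ‖J' ψ‖ ^ 2 ≤ Q (J' ψ) := hJ'lb ψ hψD
    nlinarith [hnorm]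
  have hd : 0 < alpha - lam0 := by linarith
  rw [div_mul_eq_mul_div, le_div_iff₀ hd]
  nlinarith [key]
end

section
/- Under the hypotheses of the localization proposition, if α > λ + γ then Q(J E(λ)ω) ≤ (λ + γ - λ₀(λ + γ - λ₀)/(α - λ₀)) ‖E(λ)ω‖² for all ω ∈ H. -/
open ContinuousLinearMap

/-- Localization estimate for spectral projections of the operator associated to a
closed bounded-below quadratic form `Q`: if `α > λ + γ`, then
`‖J E(λ)ω‖² ≥ ((α − λ − γ)/(α − λ₀)) ‖E(λ)ω‖²` for all ω. -/
theorem stmt2 {H : Type*} [NormedAddCommGroup H] [InnerProductSpace ℝ H] [CompleteSpace H]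
    (Q : H → ℝ) (D : Set H) (lam0 gam alpha lam : ℝ)
    -- Q is bounded below by λ₀ ≤ 0
    (hlam0 : lam0 ≤ 0)
    (hQlb : ∀ ω ∈ D, lam0 * ‖ω‖ ^ 2 ≤ Q ω)
    -- J, J' bounded self-adjoint, 0 ≤ J ≤ id, J² + (J')² = id
    (J J' : H →L[ℝ] H)
    (hJsa : IsSelfAdjoint J) (hJ'sa : IsSelfAdjoint J')
    (hJpos : ∀ ω : H, (0:ℝ) ≤ inner ℝ (J ω) ω)
    (hJle : ∀ ω : H, (inner ℝ (J ω) ω : ℝ) ≤ ‖ω‖ ^ 2)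
    (hsum : J ∘L J + J' ∘L J' = 1)
    -- both preserve the form domain
    (hJD : ∀ ω ∈ D, J ω ∈ D) (hJ'D : ∀ ω ∈ D, J' ω ∈ D)
    -- IMS-type defect bound
    (hgam : 0 ≤ gam)
    (hIMS : ∀ ω ∈ D, Q (J ω) + Q (J' ω) - Q ω ≤ gam * ‖ω‖ ^ 2)
    -- ellipticity away from the critical set
    (halpha : 0 < alpha)
    (hJ'lb : ∀ ω ∈ D, alpha * ‖J' ω‖ ^ 2 ≤ Q (J' ω))
    -- E λ is the spectral projection of the associated operator onto (−∞, λ]: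
    -- it maps into the form domain and satisfies the basic spectral estimate
    (E : ℝ → H →L[ℝ] H)
    (hED : ∀ μ : ℝ, ∀ ω : H, E μ ω ∈ D)
    (hEQ : ∀ μ : ℝ, ∀ ω : H, Q (E μ ω) ≤ μ * ‖E μ ω‖ ^ 2)
    (hcond : alpha > lam + gam) :
    ∀ ω : H, Q (J (E lam ω)) ≤ (lam + gam - lam0 * ((lam + gam - lam0) / (alpha - lam0))) * ‖E lam ω‖ ^ 2 := by
  intro ω
  set η := E lam ω with hηdef
  have hη : η ∈ D := hED lam ω
  have hJη : J η ∈ D := hJD η hη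
  have hJ'η : J' η ∈ D := hJ'D η hη
  have hab : ‖J η‖ ^ 2 + ‖J' η‖ ^ 2 = ‖η‖ ^ 2 := by
    have h := congrArg (fun T : H →L[ℝ] H => (inner ℝ (T η) η : ℝ)) hsum
    simp only [ContinuousLinearMap.add_apply, ContinuousLinearMap.comp_apply,
      ContinuousLinearMap.one_apply, inner_add_left] at h
    have hJs := (ContinuousLinearMap.isSelfAdjoint_iff_isSymmetric.mp hJsa)
    have hJ's := (ContinuousLinearMap.isSelfAdjoint_iff_isSymmetric.mp hJ'sa)
    have e1 : (inner ℝ (J (J η)) η : ℝ) = ‖J η‖ ^ 2 := by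
      rw [← real_inner_self_eq_norm_sq]; exact hJs (J η) η
    have e2 : (inner ℝ (J' (J' η)) η : ℝ) = ‖J' η‖ ^ 2 := by
      rw [← real_inner_self_eq_norm_sq]; exact hJ's (J' η) η
    rw [e1, e2, real_inner_self_eq_norm_sq] at h
    linarith
  have h1 := hIMS η hη
  have h2 := hEQ lam ω
  have h3 := hJ'lb η hη
  have h4 := hQlb (J η) hJη
  have h5 := hQlb (J' η) hJ'η
  have hA : 0 < alpha - lam0 := by linarith
  set c : ℝ := (lam + gam - lam0) / (alpha - lam0) with hcdef
  have hc : c * (alpha - lam0) = lam + gam - lam0 := div_mul_cancel₀ _ (ne_of_gt hA)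
  have hb : ‖J' η‖ ^ 2 ≤ c * ‖η‖ ^ 2 := by
    rw [hcdef, div_mul_eq_mul_div, le_div_iff₀ hA]
    nlinarith [hab]
  have hneg : 0 ≤ -lam0 := by linarith
  nlinarith [mul_le_mul_of_nonneg_left hb hneg]
end
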